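/- For every δ ∈ (0, 1/2), for every probability space (Ω, F, P), every event A ∈ F, and all sub-σ-fields G and H of F, with X = E[1_A | G] and Y = E[1_A | H], one has P(|X − Y| ≥ 1 − δ) ≤ 2δ/(1 + δ). -/

import Mathlib

open MeasureTheory

/-- Core estimate: if `X ≥ 1-δ` on `U`, `Y ≤ δ` on `V`, `X - Y ≥ 1-δ` on `D ⊆ U ∩ V`,
and the integrals of `X` over `U` and `Y` over `V` both recover the `A`-mass of those
sets, then `(1+δ) P(D) ≤ δ (P(U) + P(V))`. -/
lemma contradictory_core
    {Ω : Type} {F : MeasurableSpace Ω} (P : Measure Ω) [IsProbabilityMeasure P]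
    {δ : ℝ} (hδ0 : 0 < δ)
    {X Y : Ω → ℝ} (hXint : Integrable X P) (hYint : Integrable Y P)
    {A U V D : Set Ω} (hU : MeasurableSet U) (hV : MeasurableSet V) (hD : MeasurableSet D)
    (hDU : D ⊆ U) (hDV : D ⊆ V)
    (hXU : ∀ ω ∈ U, 1 - δ ≤ X ω)
    (hYV : ∀ ω ∈ V, Y ω ≤ δ)
    (hXY : ∀ ω ∈ D, 1 - δ ≤ X ω - Y ω)
    (hintU : ∫ x in U, X x ∂P = (P (U ∩ A)).toReal)
    (hintV : ∫ x in V, Y x ∂P = (P (V ∩ A)).toReal) :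
    (1 + δ) * (P D).toReal ≤ δ * ((P U).toReal + (P V).toReal) := by
  have hPU : P U ≠ ⊤ := measure_ne_top P U
  have hPV : P V ≠ ⊤ := measure_ne_top P V
  have hDUc : MeasurableSet (U \ D) := hU.diff hD
  have hDVc : MeasurableSet (V \ D) := hV.diff hD
  -- measure splittings
  have hu : (P U).toReal = (P D).toReal + (P (U \ D)).toReal := by
    rw [← ENNReal.toReal_add (measure_ne_top P D) (measure_ne_top P _),
      ← measure_union (Set.disjoint_sdiff_right) hDUc, Set.union_diff_cancel hDU]
  have hv : (P V).toReal = (P D).toReal + (P (V \ D)).toReal := by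
    rw [← ENNReal.toReal_add (measure_ne_top P D) (measure_ne_top P _),
      ← measure_union (Set.disjoint_sdiff_right) hDVc, Set.union_diff_cancel hDV]
  set p := (P D).toReal with hp
  set w := (P (U \ D)).toReal with hw
  set z := (P (V \ D)).toReal with hz
  -- integral splittings
  have hIU : ∫ x in U, X x ∂P = (∫ x in D, X x ∂P) + ∫ x in U \ D, X x ∂P := by
    rw [← setIntegral_union Set.disjoint_sdiff_right hDUc hXint.integrableOn
      hXint.integrableOn, Set.union_diff_cancel hDU]
  have hIV : ∫ x in V, Y x ∂P = (∫ x in D, Y x ∂P) + ∫ x in V \ D, Y x ∂P := by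
    rw [← setIntegral_union Set.disjoint_sdiff_right hDVc hYint.integrableOn
      hYint.integrableOn, Set.union_diff_cancel hDV]
  -- pointwise bounds integrated
  have hS2 : (1 - δ) * w ≤ ∫ x in U \ D, X x ∂P := by
    have := setIntegral_mono_on (integrableOn_const (measure_ne_top P _))
      hXint.integrableOn hDUc (fun x hx => hXU x hx.1)
    simpa [mul_comm, measureReal_def] using this
  have hS3 : (1 - δ) * p + ∫ x in D, Y x ∂P ≤ ∫ x in D, X x ∂P := by
    have h1 : ∫ x in D, ((1 - δ) + Y x) ∂P ≤ ∫ x in D, X x ∂P := by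
      refine setIntegral_mono_on
        ((integrableOn_const (measure_ne_top P _)).add hYint.integrableOn)
        hXint.integrableOn hD (fun x hx => by have := hXY x hx; linarith)
    have h2 : ∫ x in D, ((1 - δ) + Y x) ∂P
        = (1 - δ) * p + ∫ x in D, Y x ∂P := by
      rw [integral_add (integrableOn_const (C := (1 - δ)) (measure_ne_top P D))
        hYint.integrableOn]
      simp [mul_comm, measureReal_def, hp]
    linarith [h2 ▸ h1]
  have hS5 : ∫ x in V \ D, Y x ∂P ≤ δ * z := by
    have := setIntegral_mono_on hYint.integrableOn
      (integrableOn_const (measure_ne_top P _)) hDVc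
      (fun x hx => hYV x hx.1)
    simpa [mul_comm, measureReal_def] using this
  -- the A-mass comparison
  have hS4 : (P (U ∩ A)).toReal ≤ (P (V ∩ A)).toReal + w := by
    have hsub : U ∩ A ⊆ (V ∩ A) ∪ (U \ D) := by
      intro x hx
      by_cases hxV : x ∈ V
      · exact Or.inl ⟨hxV, hx.2⟩
      · exact Or.inr ⟨hx.1, fun hxD => hxV (hDV hxD)⟩
    have h1 : P (U ∩ A) ≤ P (V ∩ A) + P (U \ D) :=
      le_trans (measure_mono hsub) (measure_union_le _ _)
    have h2 := ENNReal.toReal_mono (by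
        exact ENNReal.add_ne_top.2 ⟨measure_ne_top P _, measure_ne_top P _⟩) h1
    rwa [ENNReal.toReal_add (measure_ne_top P _) (measure_ne_top P _)] at h2
  -- put everything together
  have key : (1 - δ) * p + (1 - δ) * w ≤ δ * z + w := by
    have := hintU
    have := hintV
    linarith [hIU, hIV, hS2, hS3, hS5, hS4, hintU, hintV]
  nlinarith [key, hu, hv, ENNReal.toReal_nonneg (a := P D)]


lemma indicator_one_integrable
    {Ω : Type} {F : MeasurableSpace Ω} (P : Measure Ω) [IsFiniteMeasure P]
    {A : Set Ω} (hA : MeasurableSet A) :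
    Integrable (A.indicator (fun _ => (1 : ℝ))) P :=
  (integrable_const (1 : ℝ)).indicator hA

/-- Integral of the conditional expectation of an indicator over a sub-σ-field
measurable set recovers the mass of the intersection. -/
lemma condexp_indicator_setIntegral
    {Ω : Type} {G F : MeasurableSpace Ω} (hG : G ≤ F) (P : Measure Ω)
    [IsProbabilityMeasure P] {A : Set Ω} (hA : MeasurableSet A)
    {S : Set Ω} (hS : MeasurableSet[G] S) :
    ∫ x in S, (P[A.indicator (fun _ => (1 : ℝ)) | G]) x ∂P = (P (S ∩ A)).toReal := by
  have hf_int : Integrable (A.indicator (fun _ => (1 : ℝ))) P :=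
    (integrable_const (1 : ℝ)).indicator hA
  rw [setIntegral_condExp hG hf_int hS, setIntegral_indicator hA, setIntegral_const,
    smul_eq_mul, mul_one, measureReal_def]

/-- Abstract form of the main theorem. -/
lemma contradictory_main_core
    {Ω : Type} {F : MeasurableSpace Ω} (P : Measure Ω) [IsProbabilityMeasure P]
    {δ : ℝ} (hδ0 : 0 < δ) (hδ1 : δ < 1 / 2) (A : Set Ω)
    {X Y : Ω → ℝ} (hXm : Measurable X) (hYm : Measurable Y)
    (hXint : Integrable X P) (hYint : Integrable Y P)
    (hX0 : ∀ᵐ ω ∂P, 0 ≤ X ω) (hX1 : ∀ᵐ ω ∂P, X ω ≤ 1)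
    (hY0 : ∀ᵐ ω ∂P, 0 ≤ Y ω) (hY1 : ∀ᵐ ω ∂P, Y ω ≤ 1)
    (hintU : ∫ x in {ω | 1 - δ ≤ X ω}, X x ∂P = (P ({ω | 1 - δ ≤ X ω} ∩ A)).toReal)
    (hintV : ∫ x in {ω | Y ω ≤ δ}, Y x ∂P = (P ({ω | Y ω ≤ δ} ∩ A)).toReal)
    (hintU' : ∫ x in {ω | 1 - δ ≤ Y ω}, Y x ∂P = (P ({ω | 1 - δ ≤ Y ω} ∩ A)).toReal)
    (hintV' : ∫ x in {ω | X ω ≤ δ}, X x ∂P = (P ({ω | X ω ≤ δ} ∩ A)).toReal) :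
    P {ω | 1 - δ ≤ |X ω - Y ω|} ≤ ENNReal.ofReal (2 * δ / (1 + δ)) := by
  set U : Set Ω := {ω | 1 - δ ≤ X ω} with hUdef
  set V : Set Ω := {ω | Y ω ≤ δ} with hVdef
  set U' : Set Ω := {ω | 1 - δ ≤ Y ω} with hU'def
  set V' : Set Ω := {ω | X ω ≤ δ} with hV'def
  have hU : MeasurableSet U := measurableSet_le measurable_const hXm
  have hV : MeasurableSet V := measurableSet_le hYm measurable_const
  have hU' : MeasurableSet U' := measurableSet_le measurable_const hYm
  have hV' : MeasurableSet V' := measurableSet_le hXm measurable_const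
  set D : Set Ω := {ω | 1 - δ ≤ X ω - Y ω} ∩ (U ∩ V) with hDdef
  set D' : Set Ω := {ω | 1 - δ ≤ Y ω - X ω} ∩ (U' ∩ V') with hD'def
  have hD : MeasurableSet D :=
    (measurableSet_le measurable_const (hXm.sub hYm)).inter (hU.inter hV)
  have hD' : MeasurableSet D' :=
    (measurableSet_le measurable_const (hYm.sub hXm)).inter (hU'.inter hV')
  have core1 : (1 + δ) * (P D).toReal ≤ δ * ((P U).toReal + (P V).toReal) :=
    contradictory_core P hδ0 hXint hYint hU hV hD
      (fun ω hω => hω.2.1) (fun ω hω => hω.2.2)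
      (fun ω hω => hω) (fun ω hω => hω) (fun ω hω => hω.1) hintU hintV
  have core2 : (1 + δ) * (P D').toReal ≤ δ * ((P U').toReal + (P V').toReal) :=
    contradictory_core P hδ0 hYint hXint hU' hV' hD'
      (fun ω hω => hω.2.1) (fun ω hω => hω.2.2)
      (fun ω hω => hω) (fun ω hω => hω) (fun ω hω => hω.1) hintU' hintV'
  -- the bad event is a.e. contained in D ∪ D'
  set N : Set Ω := {ω | ¬(0 ≤ X ω ∧ X ω ≤ 1 ∧ 0 ≤ Y ω ∧ Y ω ≤ 1)} with hNdef
  have hN0 : P N = 0 := by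
    have hae : ∀ᵐ ω ∂P, 0 ≤ X ω ∧ X ω ≤ 1 ∧ 0 ≤ Y ω ∧ Y ω ≤ 1 := by
      filter_upwards [hX0, hX1, hY0, hY1] with ω h1 h2 h3 h4
      exact ⟨h1, h2, h3, h4⟩
    exact ae_iff.mp hae
  set T : Set Ω := {ω | 1 - δ ≤ |X ω - Y ω|} with hTdef
  have hTsub : T ⊆ (D ∪ D') ∪ N := by
    intro ω hω
    by_cases hωN : ω ∈ N
    · exact Or.inr hωN
    · left
      obtain ⟨h0X, h1X, h0Y, h1Y⟩ : 0 ≤ X ω ∧ X ω ≤ 1 ∧ 0 ≤ Y ω ∧ Y ω ≤ 1 := not_not.mp hωN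
      have habs : 1 - δ ≤ |X ω - Y ω| := hω
      rcases le_abs.mp habs with hc | hc
      · exact Or.inl ⟨hc, show (1 : ℝ) - δ ≤ X ω by linarith,
          show Y ω ≤ δ by linarith⟩
      · have hc' : 1 - δ ≤ Y ω - X ω := by linarith
        exact Or.inr ⟨hc', show (1 : ℝ) - δ ≤ Y ω by linarith,
          show X ω ≤ δ by linarith⟩
  have hPT : (P T).toReal ≤ (P D).toReal + (P D').toReal := by
    have h1 : P T ≤ P D + P D' := by
      calc P T ≤ P ((D ∪ D') ∪ N) := measure_mono hTsub
        _ ≤ P (D ∪ D') + P N := measure_union_le _ _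
        _ = P (D ∪ D') := by rw [hN0, add_zero]
        _ ≤ P D + P D' := measure_union_le _ _
    have h2 := ENNReal.toReal_mono
      (ENNReal.add_ne_top.2 ⟨measure_ne_top P _, measure_ne_top P _⟩) h1
    rwa [ENNReal.toReal_add (measure_ne_top P _) (measure_ne_top P _)] at h2
  -- pairing up disjoint sets
  have hdisj1 : (P U).toReal + (P V').toReal ≤ 1 := by
    have hd : Disjoint U V' := by
      rw [Set.disjoint_left]
      intro ω h1 h2
      have h1' : 1 - δ ≤ X ω := h1
      have h2' : X ω ≤ δ := h2
      linarith
    have hle : P U + P V' ≤ 1 := (measure_union hd hV') ▸ prob_le_one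
    have h2 := ENNReal.toReal_mono (by simp) hle
    rwa [ENNReal.toReal_add (measure_ne_top P _) (measure_ne_top P _),
      ENNReal.toReal_one] at h2
  have hdisj2 : (P U').toReal + (P V).toReal ≤ 1 := by
    have hd : Disjoint U' V := by
      rw [Set.disjoint_left]
      intro ω h1 h2
      have h1' : 1 - δ ≤ Y ω := h1
      have h2' : Y ω ≤ δ := h2
      linarith
    have hle : P U' + P V ≤ 1 := (measure_union hd hV) ▸ prob_le_one
    have h2 := ENNReal.toReal_mono (by simp) hle
    rwa [ENNReal.toReal_add (measure_ne_top P _) (measure_ne_top P _),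
      ENNReal.toReal_one] at h2
  -- final real arithmetic
  have h1δ : (0 : ℝ) < 1 + δ := by linarith
  have hfinal : (P T).toReal ≤ 2 * δ / (1 + δ) := by
    rw [le_div_iff₀ h1δ]
    nlinarith [core1, core2, hPT, hdisj1, hdisj2]
  calc P T = ENNReal.ofReal (P T).toReal := (ENNReal.ofReal_toReal (measure_ne_top P T)).symm
    _ ≤ ENNReal.ofReal (2 * δ / (1 + δ)) := ENNReal.ofReal_le_ofReal hfinal

theorem contradictory_predictions_sharp_upper_bound
    {δ : ℝ} (hδ0 : 0 < δ) (hδ1 : δ < 1 / 2)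
    {Ω : Type} {F : MeasurableSpace Ω} (P : Measure Ω) [IsProbabilityMeasure P]
    (A : Set Ω) (hA : MeasurableSet A)
    (G H : MeasurableSpace Ω) (hG : G ≤ F) (hH : H ≤ F) :
    P {ω | 1 - δ ≤ |(P[A.indicator (fun _ => (1 : ℝ)) | G]) ω
        - (P[A.indicator (fun _ => (1 : ℝ)) | H]) ω|}
      ≤ ENNReal.ofReal (2 * δ / (1 + δ)) := by
  have hf_int : Integrable (A.indicator (fun _ => (1 : ℝ))) P :=
    indicator_one_integrable P hA
  have hf0 : (0 : Ω → ℝ) ≤ᵐ[P] A.indicator (fun _ => (1 : ℝ)) :=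
    Filter.Eventually.of_forall fun ω => Set.indicator_nonneg (fun _ _ => zero_le_one) ω
  have hf1 : A.indicator (fun _ => (1 : ℝ)) ≤ᵐ[P] (fun _ => (1 : ℝ)) := by
    refine Filter.Eventually.of_forall fun ω => ?_
    by_cases h : ω ∈ A <;> simp [Set.indicator_of_mem, Set.indicator_of_notMem, h]
  have hXm : Measurable[F] (P[A.indicator (fun _ => (1 : ℝ)) | G]) :=
    (stronglyMeasurable_condExp.mono hG).measurable
  have hYm : Measurable[F] (P[A.indicator (fun _ => (1 : ℝ)) | H]) :=
    (stronglyMeasurable_condExp.mono hH).measurable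
  have hX1 : ∀ᵐ ω ∂P, (P[A.indicator (fun _ => (1 : ℝ)) | G]) ω ≤ 1 := by
    have h := condExp_mono (m := G) hf_int (integrable_const (1 : ℝ)) hf1
    rw [condExp_const hG (1 : ℝ)] at h
    exact h
  have hY1 : ∀ᵐ ω ∂P, (P[A.indicator (fun _ => (1 : ℝ)) | H]) ω ≤ 1 := by
    have h := condExp_mono (m := H) hf_int (integrable_const (1 : ℝ)) hf1
    rw [condExp_const hH (1 : ℝ)] at h
    exact h
  refine contradictory_main_core P hδ0 hδ1 A hXm hYm integrable_condExp integrable_condExp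
    (condExp_nonneg hf0) hX1 (condExp_nonneg hf0) hY1 ?_ ?_ ?_ ?_
  · exact condexp_indicator_setIntegral hG P hA
      (MeasureTheory.StronglyMeasurable.measurableSet_le stronglyMeasurable_const stronglyMeasurable_condExp)
  · exact condexp_indicator_setIntegral hH P hA
      (MeasureTheory.StronglyMeasurable.measurableSet_le stronglyMeasurable_condExp stronglyMeasurable_const)
  · exact condexp_indicator_setIntegral hH P hA
      (MeasureTheory.StronglyMeasurable.measurableSet_le stronglyMeasurable_const stronglyMeasurable_condExp)
  · exact condexp_indicator_setIntegral hG P hA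
      (MeasureTheory.StronglyMeasurable.measurableSet_le stronglyMeasurable_condExp stronglyMeasurable_const)
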